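/- Let d ≥ 4, n ≥ 2, and char k = 0. Any collection of monomials of degree d of the form x_0^d, x_1^d, …, x_n^d, m_1, …, m_{n-1} (with the m_j arbitrary degree-d monomials), totaling 2n monomials, is k-linearly independent modulo the linear form x_0 + x_1 + ⋯ + x_n. -/

import Mathlib

set_option linter.unusedSectionVars false

open Polynomial in
lemma togliatti_core {k : Type*} [Field k] [CharZero k] (d a1 a2 a3 : ℕ) (hd : 4 ≤ d)
    (hsum : a1 + a2 + a3 = d) (h1 : a1 ≠ d) (h2 : a2 ≠ d) (h3 : a3 ≠ d)
    (c1 c2 γ δ : k)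
    (H : C c1 * X ^ d + C c2 + C γ * (X + 1) ^ d +
      C δ * ((X + 1) ^ a3 * X ^ a1) = (0 : k[X])) :
    c1 = 0 ∧ c2 = 0 ∧ γ = 0 ∧ δ = 0 := by
  have E : ∀ t : ℕ, ((if d = t then c1 else 0) + (if t = 0 then c2 else 0))
      + γ * (d.choose t : k)
      + δ * (if a1 ≤ t then ((a3.choose (t - a1) : ℕ) : k) else 0) = 0 := by
    intro t
    have h0 := congrArg (fun p => Polynomial.coeff p t) H
    simp only [coeff_add, coeff_C_mul, coeff_X_pow, coeff_C, coeff_X_add_one_pow,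
      coeff_mul_X_pow', coeff_zero] at h0
    have hiff : (if d = t then c1 else 0) = (if d ≤ t then if t - d = 0 then c1 else 0 else 0) := by
      split_ifs <;> first | rfl | omega
    rw [hiff]
    exact h0
  have E' : ∀ t : ℕ, t ≠ 0 → t ≠ d →
      γ * (d.choose t : k) + δ * (if a1 ≤ t then ((a3.choose (t - a1) : ℕ) : k) else 0) = 0 := by
    intro t h0 htd
    have := E t
    rw [if_neg (fun h => htd h.symm), if_neg h0] at this
    linear_combination this
  have hd0 : (d : k) ≠ 0 := Nat.cast_ne_zero.2 (by omega)
  have key : γ = 0 ∧ δ = 0 := by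
    by_cases ha1 : 2 ≤ a1
    · have e1 := E' 1 one_ne_zero (by omega)
      rw [if_neg (by omega), Nat.choose_one_right] at e1
      have hγ : γ = 0 := by
        rcases mul_eq_zero.1 (by linear_combination e1 : γ * (d:k) = 0) with h | h
        · exact h
        · exact absurd h hd0
      have ea1 := E' a1 (by omega) h1
      rw [if_pos le_rfl, Nat.sub_self, Nat.choose_zero_right, hγ] at ea1
      constructor
      · exact hγ
      · linear_combination ea1
    · push_neg at ha1
      by_cases ha2 : 2 ≤ a2
      · have ed1 := E' (d - 1) (by omega) (by omega)
        rw [if_pos (by omega), Nat.choose_eq_zero_of_lt (by omega : a3 < d - 1 - a1)] at ed1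
        have hch : d.choose (d - 1) = d := by
          rw [Nat.choose_symm (by omega : 1 ≤ d), Nat.choose_one_right]
        rw [hch] at ed1
        have hγ : γ = 0 := by
          rcases mul_eq_zero.1 (by linear_combination ed1 : γ * (d:k) = 0) with h | h
          · exact h
          · exact absurd h hd0
        refine ⟨hγ, ?_⟩
        have e1 := E' 1 one_ne_zero (by omega)
        rw [hγ, if_pos (by omega : a1 ≤ 1)] at e1
        interval_cases a1
        · simp only [Nat.sub_zero, Nat.choose_one_right] at e1
          have ha3 : a3 ≠ 0 := by omega
          rcases mul_eq_zero.1 (by linear_combination e1 : δ * (a3:k) = 0) with h | h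
          · exact h
          · exact absurd h (Nat.cast_ne_zero.2 ha3)
        · rw [Nat.sub_self, Nat.choose_zero_right] at e1
          linear_combination e1
      · push_neg at ha2
        interval_cases a1 <;> interval_cases a2
        · omega
        · -- a1 = 0, a2 = 1, a3 = d - 1
          have ha3 : a3 = d - 1 := by omega
          subst ha3
          have e1 := E' 1 one_ne_zero (by omega)
          rw [if_pos (by omega)] at e1
          simp only [Nat.sub_zero, Nat.choose_one_right] at e1
          have ed1 := E' (d - 1) (by omega) (by omega)
          rw [if_pos (by omega), Nat.sub_zero, Nat.choose_self] at ed1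
          have hch : d.choose (d - 1) = d := by
            rw [Nat.choose_symm (by omega : 1 ≤ d), Nat.choose_one_right]
          rw [hch] at ed1
          have hcast : ((d - 1 : ℕ) : k) = (d : k) - 1 := by
            push_cast [Nat.cast_sub (by omega : 1 ≤ d)]; ring
          rw [hcast] at e1
          have hδ : δ = 0 := by
            have h22 : δ * ((d:k) - 2) = 0 := by linear_combination e1 - ed1
            rcases mul_eq_zero.1 h22 with h | h
            · exact h
            · exact absurd h (sub_ne_zero.2 (by exact_mod_cast (by omega : d ≠ 2)))
          refine ⟨?_, hδ⟩
          rw [hδ] at ed1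
          rcases mul_eq_zero.1 (by linear_combination ed1 : γ * (d:k) = 0) with h | h
          · exact h
          · exact absurd h hd0
        · -- a1 = 1, a2 = 0, a3 = d - 1
          have ha3 : a3 = d - 1 := by omega
          subst ha3
          have e1 := E' 1 one_ne_zero (by omega)
          rw [if_pos le_rfl, Nat.sub_self, Nat.choose_zero_right, Nat.choose_one_right] at e1
          have ed1 := E' (d - 1) (by omega) (by omega)
          rw [if_pos (by omega)] at ed1
          have hch2 : (d - 1).choose (d - 1 - 1) = d - 1 := by
            rw [Nat.choose_symm (by omega : 1 ≤ d - 1), Nat.choose_one_right]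
          rw [hch2] at ed1
          have hch : d.choose (d - 1) = d := by
            rw [Nat.choose_symm (by omega : 1 ≤ d), Nat.choose_one_right]
          rw [hch] at ed1
          have hcast : ((d - 1 : ℕ) : k) = (d : k) - 1 := by
            push_cast [Nat.cast_sub (by omega : 1 ≤ d)]; ring
          rw [hcast] at ed1
          have hδ : δ = 0 := by
            have h22 : δ * ((d:k) - 2) = 0 := by linear_combination ed1 - e1
            rcases mul_eq_zero.1 h22 with h | h
            · exact h
            · exact absurd h (sub_ne_zero.2 (by exact_mod_cast (by omega : d ≠ 2)))
          refine ⟨?_, hδ⟩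
          rw [hδ] at e1
          rcases mul_eq_zero.1 (by linear_combination e1 : γ * (d:k) = 0) with h | h
          · exact h
          · exact absurd h hd0
        · -- a1 = 1, a2 = 1, a3 = d - 2
          have ha3 : a3 = d - 2 := by omega
          subst ha3
          have e1 := E' 1 one_ne_zero (by omega)
          rw [if_pos le_rfl, Nat.sub_self, Nat.choose_zero_right, Nat.choose_one_right] at e1
          have e2 := E' 2 (by omega) (by omega)
          rw [if_pos (by omega), Nat.choose_one_right, Nat.cast_choose_two] at e2
          have hcast : ((d - 2 : ℕ) : k) = (d : k) - 2 := by
            push_cast [Nat.cast_sub (by omega : 2 ≤ d)]; ring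
          rw [hcast] at e2
          have hγ : γ = 0 := by
            have h22 : γ * ((d:k) * (3 - (d:k))) = 0 := by
              linear_combination 2 * e2 - 2 * ((d:k) - 2) * e1
            rcases mul_eq_zero.1 h22 with h | h
            · exact h
            · rcases mul_eq_zero.1 h with h' | h'
              · exact absurd h' hd0
              · exfalso
                have : (d : k) = 3 := by linear_combination -h'
                exact (by exact_mod_cast (by omega : d ≠ 3) : (d:k) ≠ ((3:ℕ):k)) (by push_cast [this]; ring)
          refine ⟨hγ, ?_⟩
          rw [hγ] at e1
          linear_combination e1
  obtain ⟨hγ, hδ⟩ := key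
  have e0 := E 0
  rw [if_neg (by omega : ¬ d = 0), if_pos rfl, hγ, hδ] at e0
  have ed := E d
  rw [if_pos rfl, if_neg (by omega : ¬ d = 0), hγ, hδ] at ed
  exact ⟨by linear_combination ed, by linear_combination e0, hγ, hδ⟩


open MvPolynomial

section TogliattiAux

open Finset

open MvPolynomial Finset

variable {k : Type*} [Field k] {σ : Type*} [DecidableEq σ]

noncomputable def togSlice (i : σ) (m : ℕ) (G : MvPolynomial σ k) : MvPolynomial σ k :=
  ∑ ν ∈ G.support.filter (fun ν => ν i = m), monomial ν (G.coeff ν)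

lemma coeff_togSlice (i : σ) (m : ℕ) (G : MvPolynomial σ k) (ν : σ →₀ ℕ) :
    coeff ν (togSlice i m G) = if ν i = m then G.coeff ν else 0 := by
  classical
  rw [togSlice, coeff_sum]
  simp only [coeff_monomial]
  rw [Finset.sum_ite_eq' (G.support.filter (fun ν => ν i = m)) ν (fun ν => G.coeff ν)]
  by_cases h : ν i = m
  · by_cases h2 : G.coeff ν = 0 <;> simp [Finset.mem_filter, mem_support_iff, h, h2]
  · simp [Finset.mem_filter, h]

lemma togliatti_claimC : ∀ (S : Finset σ) (G : MvPolynomial σ k),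
    (∑ j ∈ S, X j) * G ≠ 0 → S.card ≤ ((∑ j ∈ S, X j) * G).support.card := by
  intro S
  induction S using Finset.induction_on with
  | empty => intro G h; simp at h
  | insert i S' hi IH =>
    intro G hG0
    have hG : G ≠ 0 := right_ne_zero_of_mul hG0
    set L' : MvPolynomial σ k := ∑ j ∈ S', X j with hL'def
    have hL : (∑ j ∈ insert i S', X j) = X i + L' := Finset.sum_insert hi
    set F := (∑ j ∈ insert i S', X j) * G with hFdef
    have hT : (G.support.image (fun ν => ν i)).Nonempty :=
      (Finset.image_nonempty).2 (support_nonempty.2 hG)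
    set k0 := (G.support.image (fun ν => ν i)).max' hT with hk0
    set k1 := (G.support.image (fun ν => ν i)).min' hT with hk1
    have hk1k0 : k1 ≤ k0 := Finset.min'_le _ _ (Finset.max'_mem _ hT)
    obtain ⟨ν0, hν0mem, hν0⟩ := Finset.mem_image.1 ((G.support.image (fun ν => ν i)).max'_mem hT)
    obtain ⟨ν1, hν1mem, hν1⟩ := Finset.mem_image.1 ((G.support.image (fun ν => ν i)).min'_mem hT)
    have hle : ∀ ν ∈ G.support, ν i ≤ k0 := fun ν hν =>
      Finset.le_max' (G.support.image (fun ν => ν i)) (ν i)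
        (Finset.mem_image_of_mem (fun ν => ν i) hν)
    have hge : ∀ ν ∈ G.support, k1 ≤ ν i := fun ν hν =>
      Finset.min'_le (G.support.image (fun ν => ν i)) (ν i)
        (Finset.mem_image_of_mem (fun ν => ν i) hν)
    set Gtop := togSlice i k0 G with hGtopdef
    set Gbot := togSlice i k1 G with hGbotdef
    have hGtop : Gtop ≠ 0 := fun h => by
      have := coeff_togSlice i k0 G ν0
      rw [← hGtopdef, h, coeff_zero, if_pos hν0] at this
      exact (mem_support_iff.1 hν0mem) this.symm
    have hGbot : Gbot ≠ 0 := fun h => by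
      have := coeff_togSlice i k1 G ν1
      rw [← hGbotdef, h, coeff_zero, if_pos hν1] at this
      exact (mem_support_iff.1 hν1mem) this.symm
    -- coefficient of L' * P
    have coeffL' : ∀ (P : MvPolynomial σ k) (ν : σ →₀ ℕ), coeff ν (L' * P) =
        ∑ j ∈ S', (if j ∈ ν.support then coeff (ν - Finsupp.single j 1) P else 0) := by
      intro P ν
      rw [hL'def, Finset.sum_mul, coeff_sum]
      exact Finset.sum_congr rfl fun j _ => coeff_X_mul' ν j P
    have hsub_apply : ∀ (ν : σ →₀ ℕ) (j : σ), j ≠ i →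
        (ν - Finsupp.single j 1 : σ →₀ ℕ) i = ν i := by
      intro ν j hj
      rw [Finsupp.tsub_apply, Finsupp.single_apply, if_neg hj, Nat.sub_zero]
    -- Claim A : at level k0+1, F agrees with Gtop * X i
    have claimA : ∀ ν : σ →₀ ℕ, ν i = k0 + 1 → coeff ν F = coeff ν (Gtop * X i) := by
      intro ν hν
      rw [hFdef, hL, add_mul, coeff_add, coeffL']
      have h2 : ∑ j ∈ S', (if j ∈ ν.support then coeff (ν - Finsupp.single j 1) G else 0) = 0 := by
        refine Finset.sum_eq_zero fun j hj => ?_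
        have hji : j ≠ i := fun h => hi (h ▸ hj)
        split_ifs with hmem
        · rw [notMem_support_iff.1]
          intro hin
          have := hle _ hin
          rw [hsub_apply ν j hji, hν] at this
          omega
        · rfl
      rw [h2, add_zero, coeff_X_mul', coeff_mul_X']
      have himem : i ∈ ν.support := by
        rw [Finsupp.mem_support_iff, hν]; omega
      rw [if_pos himem, if_pos himem, coeff_togSlice]
      rw [if_pos (show (ν - Finsupp.single i 1 : σ →₀ ℕ) i = k0 by
        rw [Finsupp.tsub_apply, Finsupp.single_apply, if_pos rfl, hν]
        omega)]
    -- Claim B : at level k1, F agrees with L' * Gbot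
    have claimB : ∀ ν : σ →₀ ℕ, ν i = k1 → coeff ν F = coeff ν (L' * Gbot) := by
      intro ν hν
      rw [hFdef, hL, add_mul, coeff_add, coeffL', coeffL']
      have h1 : coeff ν (X i * G) = 0 := by
        rw [coeff_X_mul']
        split_ifs with hmem
        · rw [notMem_support_iff.1]
          intro hin
          have := hge _ hin
          rw [Finsupp.tsub_apply, Finsupp.single_apply, if_pos rfl, hν] at this
          have hipos : ν i ≠ 0 := Finsupp.mem_support_iff.1 hmem
          omega
        · rfl
      rw [h1, zero_add]
      refine Finset.sum_congr rfl fun j hj => ?_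
      have hji : j ≠ i := fun h => hi (h ▸ hj)
      split_ifs with hmem
      · rw [coeff_togSlice, if_pos (by rw [hsub_apply ν j hji, hν])]
      · rfl
    -- support inclusions
    have hsubA : (Gtop * X i).support ⊆ F.support := by
      intro ν hν
      have hlev : ν i = k0 + 1 := by
        have hne := mem_support_iff.1 hν
        rw [coeff_mul_X'] at hne
        split_ifs at hne with hmem
        · have := coeff_togSlice i k0 G (ν - Finsupp.single i 1)
          rw [Finsupp.tsub_apply, Finsupp.single_apply, if_pos rfl] at this
          by_contra hcon
          rw [if_neg (by have := Finsupp.mem_support_iff.1 hmem; omega)] at this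
          exact hne this
        · exact absurd rfl hne
      rw [mem_support_iff, claimA ν hlev]
      exact mem_support_iff.1 hν
    have hsubB : (L' * Gbot).support ⊆ F.support := by
      intro ν hν
      have hlev : ν i = k1 := by
        have hne := mem_support_iff.1 hν
        rw [coeffL'] at hne
        obtain ⟨j, hj, hjne⟩ := Finset.exists_ne_zero_of_sum_ne_zero hne
        have hji : j ≠ i := fun h => hi (h ▸ hj)
        split_ifs at hjne with hmem
        · have := coeff_togSlice i k1 G (ν - Finsupp.single j 1)
          by_contra hcon
          rw [if_neg (by rw [hsub_apply ν j hji]; exact hcon)] at this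
          exact hjne this
        · exact absurd rfl hjne
      rw [mem_support_iff, claimB ν hlev]
      exact mem_support_iff.1 hν
    have hdisj : Disjoint (Gtop * X i).support (L' * Gbot).support := by
      rw [Finset.disjoint_left]
      intro ν hνA hνB
      have hA : ν i = k0 + 1 := by
        have hne := mem_support_iff.1 hνA
        rw [coeff_mul_X'] at hne
        split_ifs at hne with hmem
        · have := coeff_togSlice i k0 G (ν - Finsupp.single i 1)
          rw [Finsupp.tsub_apply, Finsupp.single_apply, if_pos rfl] at this
          by_contra hcon
          rw [if_neg (by have := Finsupp.mem_support_iff.1 hmem; omega)] at this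
          exact hne this
        · exact absurd rfl hne
      have hB : ν i = k1 := by
        have hne := mem_support_iff.1 hνB
        rw [coeffL'] at hne
        obtain ⟨j, hj, hjne⟩ := Finset.exists_ne_zero_of_sum_ne_zero hne
        have hji : j ≠ i := fun h => hi (h ▸ hj)
        split_ifs at hjne with hmem
        · have := coeff_togSlice i k1 G (ν - Finsupp.single j 1)
          by_contra hcon
          rw [if_neg (by rw [hsub_apply ν j hji]; exact hcon)] at this
          exact hjne this
        · exact absurd rfl hjne
      omega
    by_cases hS' : S'.Nonempty
    · obtain ⟨j0, hj0⟩ := hS'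
      have hL'ne : L' ≠ 0 := by
        intro h
        have : coeff (Finsupp.single j0 1) L' = 1 := by
          rw [hL'def, coeff_sum]
          have : ∀ j ∈ S', coeff (Finsupp.single j0 1) (X j : MvPolynomial σ k)
              = if j = j0 then 1 else 0 := by
            intro j _
            rw [coeff_X']
            congr 1
            simp [Finsupp.single_left_inj (one_ne_zero (α := ℕ)), eq_iff_iff]
          rw [Finset.sum_congr rfl this, Finset.sum_ite_eq' S' j0 (fun _ => (1:k)), if_pos hj0]
        rw [h, coeff_zero] at this
        exact one_ne_zero this.symm
      have hprod : L' * Gbot ≠ 0 := mul_ne_zero hL'ne hGbot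
      have hIH := IH Gbot hprod
      have hXne : Gtop * X i ≠ 0 := mul_ne_zero hGtop (X_ne_zero i)
      have h1 : 1 ≤ (Gtop * X i).support.card :=
        Finset.card_pos.2 (support_nonempty.2 hXne)
      calc (insert i S').card = S'.card + 1 := Finset.card_insert_of_notMem hi
        _ ≤ (L' * Gbot).support.card + (Gtop * X i).support.card := Nat.add_le_add hIH h1
        _ = ((L' * Gbot).support ∪ (Gtop * X i).support).card :=
            (Finset.card_union_of_disjoint hdisj.symm).symm
        _ ≤ F.support.card := Finset.card_le_card (Finset.union_subset hsubB hsubA)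
    · rw [Finset.not_nonempty_iff_eq_empty] at hS'
      subst hS'
      rw [Finset.card_insert_of_notMem hi, Finset.card_empty]
      exact Finset.card_pos.2 (support_nonempty.2 hG0)

open MvPolynomial Finset

variable {k : Type*} [Field k] [CharZero k] {σ : Type*} [DecidableEq σ]

lemma togliatti_eq_single {a : σ →₀ ℕ} {i : σ} (h : ∀ j, j ≠ i → a j = 0) :
    a = Finsupp.single i (a i) := by
  rw [Finsupp.eq_single_iff]
  refine ⟨fun j hj => ?_, rfl⟩
  rw [Finset.mem_singleton]
  by_contra hji
  exact Finsupp.mem_support_iff.1 hj (h j hji)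

lemma togliatti_base (d : ℕ) (hd : 4 ≤ d) (S : Finset σ) (hS : S.card = 3)
    (A : Finset (σ →₀ ℕ)) (hA : A.card + 2 ≤ 3)
    (hAvar : ∀ a ∈ A, ∀ j ∈ a.support, j ∈ S)
    (hAdeg : ∀ a ∈ A, (a.sum fun _ e => e) = d)
    (hAnp : ∀ a ∈ A, ∀ l : σ, a ≠ Finsupp.single l d)
    (F : MvPolynomial σ k)
    (hF : ∀ ν : σ →₀ ℕ, coeff ν F ≠ 0 → ν ∈ A ∨ ∃ l ∈ S, ν = Finsupp.single l d)
    (hdvd : (∑ j ∈ S, X j) ∣ F) : F = 0 := by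
  classical
  obtain ⟨i1, i2, i3, h12, h13, h23, rfl⟩ := Finset.card_eq_three.1 hS
  have hd0 : d ≠ 0 := by omega
  set s1 := Finsupp.single i1 d with hs1
  set s2 := Finsupp.single i2 d with hs2
  set s3 := Finsupp.single i3 d with hs3
  have hmem3 : ∀ j : σ, j ∈ ({i1, i2, i3} : Finset σ) ↔ (j = i1 ∨ j = i2 ∨ j = i3) := by
    intro j; simp
  -- produce the extra monomial exponent a (real or junk)
  obtain ⟨a, haA, hasupp, hadeg, hanp1, hanp2, hanp3⟩ :
      ∃ a : σ →₀ ℕ,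
        (∀ ν : σ →₀ ℕ, coeff ν F ≠ 0 → ν = a ∨ ν = s1 ∨ ν = s2 ∨ ν = s3) ∧
        (∀ j, a j ≠ 0 → (j = i1 ∨ j = i2 ∨ j = i3)) ∧
        (a i1 + a i2 + a i3 = d) ∧ a i1 ≠ d ∧ a i2 ≠ d ∧ a i3 ≠ d := by
    have hsum_eq : ∀ b : σ →₀ ℕ, (∀ j, b j ≠ 0 → (j = i1 ∨ j = i2 ∨ j = i3)) →
        (b.sum fun _ e => e) = b i1 + b i2 + b i3 := by
      intro b hb
      rw [Finsupp.sum]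
      rw [Finset.sum_subset (fun j hj => (hmem3 j).2 (hb j (Finsupp.mem_support_iff.1 hj)))
        (fun j _ hj => by_contra fun h => hj (Finsupp.mem_support_iff.2 h))]
      rw [Finset.sum_insert (by simp [h12, h13]), Finset.sum_insert (by simp [h23]),
        Finset.sum_singleton, add_assoc]
    rcases A.eq_empty_or_nonempty with hAe | ⟨a0, ha0⟩
    · refine ⟨Finsupp.single i1 1 + Finsupp.single i2 1 + Finsupp.single i3 (d - 2),
        ?_, ?_, ?_, ?_, ?_, ?_⟩
      · intro ν hν
        rcases hF ν hν with h | ⟨l, hl, rfl⟩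
        · rw [hAe] at h; exact absurd h (Finset.notMem_empty ν)
        · rcases (hmem3 l).1 hl with rfl | rfl | rfl
          · exact Or.inr (Or.inl rfl)
          · exact Or.inr (Or.inr (Or.inl rfl))
          · exact Or.inr (Or.inr (Or.inr rfl))
      · intro j hj
        by_contra hcon
        push_neg at hcon
        obtain ⟨hj1, hj2, hj3⟩ := hcon
        simp [Finsupp.add_apply, Finsupp.single_apply, Ne.symm hj1, Ne.symm hj2,
          Ne.symm hj3] at hj
      · simp [Finsupp.add_apply, Finsupp.single_apply, h12, h13, h23,
          Ne.symm h12, Ne.symm h13, Ne.symm h23]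
        omega
      · simp [Finsupp.add_apply, Finsupp.single_apply, h12, h13, h23,
          Ne.symm h12, Ne.symm h13, Ne.symm h23]
        omega
      · simp [Finsupp.add_apply, Finsupp.single_apply, h12, h13, h23,
          Ne.symm h12, Ne.symm h13, Ne.symm h23]
        omega
      · simp [Finsupp.add_apply, Finsupp.single_apply, h12, h13, h23,
          Ne.symm h12, Ne.symm h13, Ne.symm h23]
        omega
    · have hAs : A = {a0} := by
        apply Finset.eq_singleton_iff_unique_mem.2
        exact ⟨ha0, fun b hb => Finset.card_le_one.1 (by omega) b hb a0 ha0⟩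
      have ha0supp : ∀ j, a0 j ≠ 0 → (j = i1 ∨ j = i2 ∨ j = i3) := by
        intro j hj
        exact (hmem3 j).1 (hAvar a0 ha0 j (Finsupp.mem_support_iff.2 hj))
      have ha0deg : a0 i1 + a0 i2 + a0 i3 = d := by
        rw [← hsum_eq a0 ha0supp]; exact hAdeg a0 ha0
      refine ⟨a0, ?_, ha0supp, ha0deg, ?_, ?_, ?_⟩
      · intro ν hν
        rcases hF ν hν with h | ⟨l, hl, rfl⟩
        · rw [hAs, Finset.mem_singleton] at h; exact Or.inl h
        · rcases (hmem3 l).1 hl with rfl | rfl | rfl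
          · exact Or.inr (Or.inl rfl)
          · exact Or.inr (Or.inr (Or.inl rfl))
          · exact Or.inr (Or.inr (Or.inr rfl))
      · intro h
        refine hAnp a0 ha0 i1 (togliatti_eq_single (fun j hj => ?_) |>.trans (by rw [h]))
        by_contra hj0
        rcases ha0supp j hj0 with rfl | rfl | rfl
        · exact hj rfl
        · omega
        · omega
      · intro h
        refine hAnp a0 ha0 i2 (togliatti_eq_single (fun j hj => ?_) |>.trans (by rw [h]))
        by_contra hj0
        rcases ha0supp j hj0 with rfl | rfl | rfl
        · omega
        · exact hj rfl
        · omega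
      · intro h
        refine hAnp a0 ha0 i3 (togliatti_eq_single (fun j hj => ?_) |>.trans (by rw [h]))
        by_contra hj0
        rcases ha0supp j hj0 with rfl | rfl | rfl
        · omega
        · omega
        · exact hj rfl
  -- a is none of the pure powers
  have has1 : a ≠ s1 := fun h => hanp1 (by rw [h, hs1, Finsupp.single_apply, if_pos rfl])
  have has2 : a ≠ s2 := fun h => hanp2 (by rw [h, hs2, Finsupp.single_apply]; simp)
  have has3 : a ≠ s3 := fun h => hanp3 (by rw [h, hs3, Finsupp.single_apply]; simp)
  have hs12 : s1 ≠ s2 := fun h => h12 ((Finsupp.single_left_inj hd0).1 h)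
  have hs13 : s1 ≠ s3 := fun h => h13 ((Finsupp.single_left_inj hd0).1 h)
  have hs23 : s2 ≠ s3 := fun h => h23 ((Finsupp.single_left_inj hd0).1 h)
  set c1 := coeff s1 F
  set c2 := coeff s2 F
  set c3 := coeff s3 F
  set β := coeff a F with hβ
  have Feq : F = monomial s1 c1 + monomial s2 c2 + monomial s3 c3 + monomial a β := by
    apply MvPolynomial.ext
    intro ν
    simp only [coeff_add, coeff_monomial]
    by_cases hν1 : ν = s1
    · subst hν1
      rw [if_pos rfl, if_neg (Ne.symm hs12), if_neg (Ne.symm hs13), if_neg has1]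
      ring
    by_cases hν2 : ν = s2
    · subst hν2
      rw [if_neg hs12, if_pos rfl, if_neg (Ne.symm hs23), if_neg has2]
      ring
    by_cases hν3 : ν = s3
    · subst hν3
      rw [if_neg hs13, if_neg hs23, if_pos rfl, if_neg has3]
      ring
    by_cases hνa : ν = a
    · subst hνa
      rw [if_neg (fun h => hν1 h.symm), if_neg (fun h => hν2 h.symm),
        if_neg (fun h => hν3 h.symm), if_pos rfl]
      ring
    · rw [if_neg (fun h => hν1 h.symm), if_neg (fun h => hν2 h.symm),
        if_neg (fun h => hν3 h.symm), if_neg (fun h => hνa h.symm)]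
      by_contra hne
      have : coeff ν F ≠ 0 := by
        intro h; apply hne; rw [h]; ring
      rcases haA ν this with h | h | h | h <;> tauto
  -- the evaluation map
  set g : σ → Polynomial k := fun j => if j = i1 then Polynomial.X else if j = i2 then 1
    else if j = i3 then -(Polynomial.X + 1) else 0 with hg
  have hg1 : g i1 = Polynomial.X := by rw [hg]; simp
  have hg2 : g i2 = 1 := by rw [hg]; simp [Ne.symm h12]
  have hg3 : g i3 = -(Polynomial.X + 1) := by rw [hg]; simp [Ne.symm h13, Ne.symm h23]
  have hψL : aeval g (∑ j ∈ ({i1, i2, i3} : Finset σ), X j : MvPolynomial σ k) = 0 := by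
    rw [map_sum, Finset.sum_insert (by simp [h12, h13]), Finset.sum_insert (by simp [h23]),
      Finset.sum_singleton, aeval_X, aeval_X, aeval_X, hg1, hg2, hg3]
    ring
  have hψF : aeval g F = 0 := by
    obtain ⟨Q, rfl⟩ := hdvd
    rw [map_mul, hψL, zero_mul]
  have hψmono : ∀ (s : σ →₀ ℕ) (c : k), aeval g (monomial s c)
      = Polynomial.C c * (g i1 ^ s i1 * (g i2 ^ s i2 * g i3 ^ s i3)) →
      True := fun _ _ _ => trivial
  -- compute the evaluation of F
  have key : Polynomial.C c1 * Polynomial.X ^ d + Polynomial.C c2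
      + Polynomial.C (c3 * (-1) ^ d) * (Polynomial.X + 1) ^ d
      + Polynomial.C (β * (-1) ^ (a i3)) *
        ((Polynomial.X + 1) ^ (a i3) * Polynomial.X ^ (a i1)) = 0 := by
    have e1 : aeval g (monomial s1 c1 : MvPolynomial σ k) = Polynomial.C c1 * Polynomial.X ^ d := by
      rw [aeval_monomial, hs1, Finsupp.prod_single_index (by rw [pow_zero]), hg1]
      rfl
    have e2 : aeval g (monomial s2 c2 : MvPolynomial σ k) = Polynomial.C c2 := by
      rw [aeval_monomial, hs2, Finsupp.prod_single_index (by rw [pow_zero]), hg2, one_pow, mul_one]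
      rfl
    have e3 : aeval g (monomial s3 c3 : MvPolynomial σ k)
        = Polynomial.C c3 * (-(Polynomial.X + 1)) ^ d := by
      rw [aeval_monomial, hs3, Finsupp.prod_single_index (by rw [pow_zero]), hg3]
      rfl
    have ea : aeval g (monomial a β : MvPolynomial σ k)
        = Polynomial.C β * (Polynomial.X ^ (a i1) * (-(Polynomial.X + 1)) ^ (a i3)) := by
      rw [aeval_monomial]
      have hprod : (a.prod fun j e => g j ^ e) = ∏ j ∈ ({i1, i2, i3} : Finset σ), g j ^ a j := by
        rw [Finsupp.prod]
        apply Finset.prod_subset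
        · intro j hj
          exact (hmem3 j).2 (hasupp j (Finsupp.mem_support_iff.1 hj))
        · intro j _ hj
          rw [Finsupp.notMem_support_iff.1 hj, pow_zero]
      rw [hprod, Finset.prod_insert (by simp [h12, h13]), Finset.prod_insert (by simp [h23]),
        Finset.prod_singleton, hg1, hg2, hg3, one_pow, one_mul]
      rfl
    have h0 : Polynomial.C c1 * Polynomial.X ^ d + Polynomial.C c2
        + Polynomial.C c3 * (-(Polynomial.X + 1)) ^ d
        + Polynomial.C β * (Polynomial.X ^ (a i1) * (-(Polynomial.X + 1)) ^ (a i3)) = 0 := by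
      rw [← e1, ← e2, ← e3, ← ea, ← map_add, ← map_add, ← map_add, ← Feq, hψF]
    have hc3 : Polynomial.C (c3 * (-1) ^ d) = Polynomial.C c3 * (-1 : Polynomial k) ^ d := by
      rw [map_mul, map_pow, map_neg, map_one]
    have hcβ : Polynomial.C (β * (-1) ^ (a i3))
        = Polynomial.C β * (-1 : Polynomial k) ^ (a i3) := by
      rw [map_mul, map_pow, map_neg, map_one]
    rw [hc3, hcβ]
    have hneg : (-(Polynomial.X + 1) : Polynomial k) = (-1) * (Polynomial.X + 1) := by ring
    rw [hneg, mul_pow, mul_pow] at h0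
    linear_combination h0
  obtain ⟨hc1, hc2, hγ, hδ⟩ := togliatti_core d (a i1) (a i2) (a i3) hd hadeg
    (by omega) (by omega) (by omega) c1 c2 (c3 * (-1) ^ d) (β * (-1) ^ (a i3)) key
  have hc3 : c3 = 0 := by
    rcases mul_eq_zero.1 hγ with h | h
    · exact h
    · exact absurd h (pow_ne_zero _ (neg_ne_zero.2 one_ne_zero))
  have hβ0 : β = 0 := by
    rcases mul_eq_zero.1 hδ with h | h
    · exact h
    · exact absurd h (pow_ne_zero _ (neg_ne_zero.2 one_ne_zero))
  rw [Feq, hc1, hc2, hc3, hβ0]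
  simp

open MvPolynomial Finset

variable {k : Type*} [Field k] [CharZero k] {σ : Type*} [DecidableEq σ]

noncomputable def togRes (i : σ) : MvPolynomial σ k →ₐ[k] MvPolynomial σ k :=
  aeval (fun j => if j = i then 0 else X j)

lemma togRes_monomial (i : σ) (s : σ →₀ ℕ) (c : k) :
    togRes i (monomial s c) = if s i = 0 then monomial s c else 0 := by
  rw [togRes, aeval_monomial]
  by_cases h : s i = 0
  · rw [if_pos h]
    have he : (s.prod fun j e => (if j = i then (0 : MvPolynomial σ k) else X j) ^ e)
        = s.prod fun j e => (X j : MvPolynomial σ k) ^ e := by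
      apply Finsupp.prod_congr
      intro j hj
      rw [if_neg (fun hji : j = i => (Finsupp.mem_support_iff.1 hj) (hji ▸ h))]
    rw [he, MvPolynomial.algebraMap_eq, ← monomial_eq]
  · rw [if_neg h]
    have he : (s.prod fun j e => (if j = i then (0 : MvPolynomial σ k) else X j) ^ e) = 0 := by
      rw [Finsupp.prod]
      apply Finset.prod_eq_zero (Finsupp.mem_support_iff.2 h)
      rw [if_pos rfl, zero_pow h]
    rw [he, mul_zero]

lemma coeff_togRes (i : σ) (F : MvPolynomial σ k) (ν : σ →₀ ℕ) :
    coeff ν (togRes i F) = if ν i = 0 then coeff ν F else 0 := by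
  conv_lhs => rw [← support_sum_monomial_coeff F]
  rw [map_sum, coeff_sum]
  have hc : ∀ ν' ∈ F.support, coeff ν (togRes i (monomial ν' (coeff ν' F)))
      = if ν' = ν then (if ν' i = 0 then coeff ν' F else 0) else 0 := by
    intro ν' _
    rw [togRes_monomial]
    by_cases h : ν' i = 0
    · rw [if_pos h, coeff_monomial]
      by_cases he : ν' = ν
      · rw [if_pos he, if_pos he, if_pos h]
      · rw [if_neg he, if_neg he]
    · rw [if_neg h, coeff_zero]
      by_cases he : ν' = ν
      · rw [if_pos he, if_neg h]
      · rw [if_neg he]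
  rw [Finset.sum_congr rfl hc, Finset.sum_ite_eq' F.support ν
    (fun ν' => if ν' i = 0 then coeff ν' F else 0)]
  by_cases hν : ν ∈ F.support
  · rw [if_pos hν]
  · rw [if_neg hν, notMem_support_iff.1 hν]
    simp

lemma togRes_L (i : σ) (S : Finset σ) (hiS : i ∈ S) :
    togRes (k := k) i (∑ j ∈ S, X j) = ∑ j ∈ S.erase i, X j := by
  rw [map_sum, ← Finset.sum_erase_add S _ hiS]
  have h1 : togRes (k := k) i (X i) = 0 := by
    rw [togRes, aeval_X, if_pos rfl]
  have h2 : ∀ j ∈ S.erase i, togRes (k := k) i (X j) = X j := by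
    intro j hj
    rw [togRes, aeval_X, if_neg (Finset.mem_erase.1 hj).1]
  rw [h1, add_zero, Finset.sum_congr rfl h2]

lemma togliatti_two_support {d : ℕ} (hd : d ≠ 0) {a : σ →₀ ℕ}
    (hdeg : (a.sum fun _ e => e) = d) (hnp : ∀ l : σ, a ≠ Finsupp.single l d) :
    ∃ j1 ∈ a.support, ∃ j2 ∈ a.support, j1 ≠ j2 := by
  have hne : a.support.Nonempty := by
    rw [Finsupp.support_nonempty_iff]
    intro h
    rw [h] at hdeg
    simp at hdeg
    exact hd hdeg.symm
  obtain ⟨j1, hj1⟩ := hne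
  by_contra hcon
  push_neg at hcon
  have hsub : a.support ⊆ {j1} := by
    intro j hj
    rw [Finset.mem_singleton]
    by_contra hne
    exact hne (hcon j hj j1 hj1)
  have ha : a = Finsupp.single j1 (a j1) :=
    Finsupp.eq_single_iff.2 ⟨hsub, rfl⟩
  have : a j1 = d := by
    rw [← hdeg, ha, Finsupp.sum_single_index]
    · simp
    · rfl
  exact hnp j1 (by rw [ha, this])

lemma togliatti_ML : ∀ (M : ℕ), 3 ≤ M → ∀ (d : ℕ), 4 ≤ d → ∀ (S : Finset σ), S.card = M →
    ∀ (A : Finset (σ →₀ ℕ)), A.card + 2 ≤ M →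
    (∀ a ∈ A, ∀ j ∈ a.support, j ∈ S) →
    (∀ a ∈ A, (a.sum fun _ e => e) = d) →
    (∀ a ∈ A, ∀ l : σ, a ≠ Finsupp.single l d) →
    ∀ F : MvPolynomial σ k,
    (∀ ν : σ →₀ ℕ, coeff ν F ≠ 0 → ν ∈ A ∨ ∃ l ∈ S, ν = Finsupp.single l d) →
    (∑ j ∈ S, X j) ∣ F → F = 0 := by
  intro M
  induction M using Nat.strong_induction_on with
  | _ M IH =>
  intro hM d hd S hS A hA hAvar hAdeg hAnp F hF hdvd
  rcases Nat.eq_or_lt_of_le hM with hM3 | hM4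
  · exact togliatti_base d hd S (hM3 ▸ hS) A (by omega) hAvar hAdeg hAnp F hF hdvd
  -- step case: M ≥ 4
  have hd0 : d ≠ 0 := by omega
  have RC : ∀ i ∈ S, (A.filter (fun a => a i = 0)).card + 3 ≤ M →
      (∀ ν : σ →₀ ℕ, ν i = 0 → coeff ν F = 0) := by
    intro i hiS hcard ν hν
    set Ai := A.filter (fun a => a i = 0) with hAi
    have hres : togRes i F = 0 := by
      apply IH (M - 1) (by omega) (by omega) d hd (S.erase i)
        (by rw [Finset.card_erase_of_mem hiS, hS]) Ai (by omega)
      · intro a ha j hj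
        have haA := Finset.mem_filter.1 ha
        refine Finset.mem_erase.2 ⟨?_, hAvar a haA.1 j hj⟩
        intro hji
        exact Finsupp.mem_support_iff.1 hj (hji ▸ haA.2)
      · intro a ha
        exact hAdeg a (Finset.mem_filter.1 ha).1
      · intro a ha
        exact hAnp a (Finset.mem_filter.1 ha).1
      · intro μ hμ
        rw [coeff_togRes] at hμ
        by_cases hμi : μ i = 0
        · rw [if_pos hμi] at hμ
          rcases hF μ hμ with h | ⟨l, hl, rfl⟩
          · exact Or.inl (Finset.mem_filter.2 ⟨h, hμi⟩)
          · refine Or.inr ⟨l, Finset.mem_erase.2 ⟨?_, hl⟩, rfl⟩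
            intro hli
            rw [hli, Finsupp.single_apply, if_pos rfl] at hμi
            exact hd0 hμi
        · rw [if_neg hμi] at hμ
          exact absurd rfl hμ
      · rw [← togRes_L i S hiS]
        exact map_dvd _ hdvd
    have h2 := coeff_togRes i F ν
    rw [hres, coeff_zero, if_pos hν] at h2
    exact h2.symm
  have hpure : ∀ l : σ, coeff (Finsupp.single l d) F = 0 := by
    intro l
    by_cases hlS : l ∈ S
    · obtain ⟨i, hiS, hil, hicard⟩ : ∃ i ∈ S, i ≠ l ∧
          (A.filter (fun a => a i = 0)).card + 3 ≤ M := by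
        rcases A.eq_empty_or_nonempty with hAe | ⟨a0, ha0⟩
        · obtain ⟨i, hiS, hil⟩ := (Finset.one_lt_card_iff_nontrivial.1 (by omega : 1 < S.card)).exists_ne l
          refine ⟨i, hiS, hil, ?_⟩
          rw [hAe, Finset.filter_empty, Finset.card_empty]
          omega
        · obtain ⟨j1, hj1, j2, hj2, hj12⟩ :=
            togliatti_two_support hd0 (hAdeg a0 ha0) (hAnp a0 ha0)
          obtain ⟨i, hisupp, hil⟩ : ∃ i ∈ a0.support, i ≠ l := by
            by_cases h1 : j1 = l
            · exact ⟨j2, hj2, fun h => hj12 (h1.trans h.symm)⟩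
            · exact ⟨j1, hj1, h1⟩
          refine ⟨i, hAvar a0 ha0 i hisupp, hil, ?_⟩
          have hsub : A.filter (fun a => a i = 0) ⊆ A.erase a0 := by
            intro x hx
            have hx' := Finset.mem_filter.1 hx
            refine Finset.mem_erase.2 ⟨?_, hx'.1⟩
            intro hxa
            exact Finsupp.mem_support_iff.1 hisupp (hxa ▸ hx'.2)
          have h1 := Finset.card_le_card hsub
          rw [Finset.card_erase_of_mem ha0] at h1
          have h2 : 1 ≤ A.card := Finset.card_pos.2 ⟨a0, ha0⟩
          omega
      apply RC i hiS hicard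
      rw [Finsupp.single_apply, if_neg (fun h : l = i => hil h.symm)]
    · by_contra hc
      rcases hF _ hc with h | ⟨l', hl', he⟩
      · exact hAnp _ h l rfl
      · have : l = l' := by
          have := congrArg (fun f : σ →₀ ℕ => f l) he
          simp only [Finsupp.single_apply, if_pos rfl] at this
          by_contra hll
          rw [if_neg (fun h : l' = l => hll h.symm)] at this
          exact hd0 this
        exact hlS (this ▸ hl')
  have hsupp : F.support ⊆ A := by
    intro ν hν
    rcases hF ν (mem_support_iff.1 hν) with h | ⟨l, _, rfl⟩
    · exact h
    · exact absurd (hpure l) (mem_support_iff.1 hν)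
  by_contra hF0
  obtain ⟨Q, hQ⟩ := hdvd
  have hcc := togliatti_claimC S Q (hQ ▸ hF0)
  rw [← hQ] at hcc
  have := Finset.card_le_card hsupp
  omega

end TogliattiAux

open Finset in
theorem stmt_8 (k : Type*) [Field k] [CharZero k] (n d : ℕ) (hn : 2 ≤ n) (hd : 4 ≤ d)
    (a : Fin (n - 1) → Fin (n + 1) → ℕ) (ha : ∀ j, ∑ i, a j i = d)
    (hinj : Function.Injective a)
    (hne : ∀ j i, a j ≠ fun s => if s = i then d else 0)
    (c : Fin (n + 1) → k) (b : Fin (n - 1) → k)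
    (h : (∑ i, c i • X i ^ d) + (∑ j, b j • ∏ i, X i ^ a j i) ∈
      Ideal.span {(∑ i, X i : MvPolynomial (Fin (n + 1)) k)}) :
    c = 0 ∧ b = 0 := by
  classical
  have hd0 : d ≠ 0 := by omega
  set aj : Fin (n - 1) → (Fin (n + 1) →₀ ℕ) :=
    fun j => Finsupp.equivFunOnFinite.symm (a j) with haj
  have haj_apply : ∀ j i, aj j i = a j i := fun j i => rfl
  have haj_inj : Function.Injective aj := fun j j' hjj =>
    hinj (Finsupp.equivFunOnFinite.symm.injective hjj)
  have hne' : ∀ j l, aj j ≠ Finsupp.single l d := by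
    intro j l hjl
    apply hne j l
    funext s
    have := congrArg (fun f : Fin (n + 1) →₀ ℕ => f s) hjl
    simp only [haj_apply] at this
    rw [this, Finsupp.single_apply]
    by_cases hsl : s = l
    · rw [if_pos hsl, if_pos hsl.symm]
    · rw [if_neg hsl, if_neg (fun hh => hsl hh.symm)]
  set F : MvPolynomial (Fin (n + 1)) k :=
    (∑ i, c i • X i ^ d) + (∑ j, b j • ∏ i, X i ^ a j i) with hF
  have hXpow : ∀ i : Fin (n + 1),
      (c i • X i ^ d : MvPolynomial (Fin (n + 1)) k)
        = monomial (Finsupp.single i d) (c i) := by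
    intro i
    rw [X_pow_eq_monomial, smul_eq_C_mul, C_mul_monomial, mul_one]
  have hprod : ∀ j, (b j • ∏ i, X i ^ a j i : MvPolynomial (Fin (n + 1)) k)
      = monomial (aj j) (b j) := by
    intro j
    have h1 : (∏ i, (X i ^ a j i : MvPolynomial (Fin (n + 1)) k))
        = ∏ i ∈ (aj j).support, X i ^ (aj j) i :=
      (Finset.prod_subset (Finset.subset_univ _)
        (fun i _ hi => by
          have h0 : a j i = 0 := Finsupp.notMem_support_iff.1 hi
          rw [h0, pow_zero])).symm
    rw [h1, prod_X_pow_eq_monomial, smul_eq_C_mul, C_mul_monomial, mul_one]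
  have hcoeff : ∀ ν : Fin (n + 1) →₀ ℕ, coeff ν F =
      (∑ i, if Finsupp.single i d = ν then c i else 0)
      + (∑ j, if aj j = ν then b j else 0) := by
    intro ν
    rw [hF, coeff_add, coeff_sum, coeff_sum]
    congr 1
    · exact Finset.sum_congr rfl fun i _ => by rw [hXpow, coeff_monomial]
    · exact Finset.sum_congr rfl fun j _ => by rw [hprod, coeff_monomial]
  have hc : ∀ i0, coeff (Finsupp.single i0 d) F = c i0 := by
    intro i0
    rw [hcoeff]
    have h1 : (∑ i, if Finsupp.single i d = Finsupp.single i0 d then c i else 0) = c i0 := by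
      rw [Finset.sum_eq_single i0]
      · rw [if_pos rfl]
      · intro i _ hnei
        rw [if_neg (fun hh => hnei ((Finsupp.single_left_inj hd0).1 hh))]
      · intro habs
        exact absurd (Finset.mem_univ i0) habs
    have h2 : (∑ j, if aj j = Finsupp.single i0 d then b j else 0) = 0 :=
      Finset.sum_eq_zero fun j _ => by rw [if_neg (hne' j i0)]
    rw [h1, h2, add_zero]
  have hb : ∀ j0, coeff (aj j0) F = b j0 := by
    intro j0
    rw [hcoeff]
    have h1 : (∑ i, if Finsupp.single i d = aj j0 then c i else 0) = 0 :=
      Finset.sum_eq_zero fun i _ => by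
        rw [if_neg (fun hh => hne' j0 i hh.symm)]
    have h2 : (∑ j, if aj j = aj j0 then b j else 0) = b j0 := by
      rw [Finset.sum_eq_single j0]
      · rw [if_pos rfl]
      · intro j _ hnej
        rw [if_neg (fun hh => hnej (haj_inj hh))]
      · intro habs
        exact absurd (Finset.mem_univ j0) habs
    rw [h1, h2, zero_add]
  set A : Finset (Fin (n + 1) →₀ ℕ) := Finset.image aj Finset.univ with hA
  have hAcard : A.card = n - 1 := by
    rw [hA, Finset.card_image_of_injective _ haj_inj, Finset.card_univ, Fintype.card_fin]
  have hF0 : F = 0 := by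
    apply togliatti_ML (n + 1) (by omega) d hd Finset.univ
      (by rw [Finset.card_univ, Fintype.card_fin]) A (by omega)
    · intro a' _ j _
      exact Finset.mem_univ j
    · intro a' ha'
      obtain ⟨j, _, rfl⟩ := Finset.mem_image.1 ha'
      rw [Finsupp.sum]
      rw [Finset.sum_subset (Finset.subset_univ _)
        (fun i _ hi => Finsupp.notMem_support_iff.1 hi)]
      rw [Finset.sum_congr rfl (fun i _ => haj_apply j i)]
      exact ha j
    · intro a' ha' l
      obtain ⟨j, _, rfl⟩ := Finset.mem_image.1 ha'
      exact hne' j l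
    · intro ν hν
      by_contra hcon
      push_neg at hcon
      obtain ⟨hν1, hν2⟩ := hcon
      apply hν
      rw [hcoeff]
      rw [Finset.sum_eq_zero (fun i _ => by
        rw [if_neg (fun hh => (hν2 i (Finset.mem_univ i)) hh.symm)])]
      rw [Finset.sum_eq_zero (fun j _ => by
        rw [if_neg (fun hh : aj j = ν =>
          hν1 (Finset.mem_image.2 ⟨j, Finset.mem_univ j, hh⟩))])]
      rw [add_zero]
    · exact Ideal.mem_span_singleton.1 h
  constructor
  · funext i0
    have := hc i0
    rw [hF0, coeff_zero] at this
    exact this.symm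
  · funext j0
    have := hb j0
    rw [hF0, coeff_zero] at this
    exact this.symm
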